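/- Let f_W(x) = W^L ρ(W^{L-1} ⋯ ρ(W^1 x) ⋯) be an L-layer neural network with ReLU activation ρ(t) = max(t, 0), and let f_Ŵ(x̂) = Ŵ^L ρ(W^{L−1} ⋯ ρ(W^1 x̂) ⋯) denote the network in which only the last weight matrix is replaced by Ŵ^L ∈ B_{W^L}(ε_L) and the input by x̂ ∈ B_x(ε_x). Then for every pair of output classes i, j: f^{ij}_{Ŵ}(x̂) ≤ f^{ij}_W(x) + ε_x ‖W^L_{i,:} − W^L_{j,:}‖_1 ∏_{m=1}^{L−1} ‖W^m‖_∞ + 2 ε_L (∏_{m=1}^{L−1} ‖W^m‖_1)(‖x‖_1 + d_0 ε_x), where d_0 is the dimension of x. -/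
import Mathlib


/-- Vector ℓ1 norm: `‖v‖₁ = Σ_q |v_q|`. -/
noncomputable def vecL1 {n : ℕ} (v : Fin n → ℝ) : ℝ := ∑ q, |v q|

/-- Vector ℓ∞ norm: `‖v‖_∞ = max_q |v_q|`. -/
noncomputable def vecLinf {n : ℕ} (v : Fin n → ℝ) : ℝ := ⨆ q, |v q|

/-- Matrix ℓ∞→ℓ∞ operator norm: `‖W‖_∞ = max_p Σ_q |W_{p,q}|`. -/
noncomputable def matLinf {m n : ℕ} (W : Matrix (Fin m) (Fin n) ℝ) : ℝ := ⨆ p, ∑ q, |W p q|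

/-- Matrix ℓ1→ℓ1 operator norm: `‖W‖₁ = max_q Σ_p |W_{p,q}|`. -/
noncomputable def matL1 {m n : ℕ} (W : Matrix (Fin m) (Fin n) ℝ) : ℝ := ⨆ q, ∑ p, |W p q|

/-- `zLayer d ρ W k x` is the `k`-th zLayer-layer output
`z^k_W(x) = ρ(W^k ⋯ ρ(W^1 x) ⋯)`, with `z^0_W(x) = x`.
Here `W k` denotes the paper's weight matrix `W^{k+1}`
(so `W : ∀ k, Matrix (Fin (d (k+1))) (Fin (d k)) ℝ` lists `W^1, W^2, …`). -/
noncomputable def zLayer (d : ℕ → ℕ) (ρ : ℝ → ℝ)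
    (W : ∀ k, Matrix (Fin (d (k + 1))) (Fin (d k)) ℝ) :
    (k : ℕ) → (Fin (d 0) → ℝ) → Fin (d k) → ℝ
  | 0, x => x
  | k + 1, x => fun p => ρ ((W k).mulVec (zLayer d ρ W k x) p)

/-- `nnet d ρ W k x = (W^{k+1}) z^k_W(x)` is the output of the `(k+1)`-layer network
`f_W(x) = W^{k+1} ρ(W^k ⋯ ρ(W^1 x) ⋯)`.  In particular `nnet d ρ W (L-1)` is the
paper's `L`-layer network. -/
noncomputable def nnet (d : ℕ → ℕ) (ρ : ℝ → ℝ)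
    (W : ∀ k, Matrix (Fin (d (k + 1))) (Fin (d k)) ℝ) (k : ℕ)
    (x : Fin (d 0) → ℝ) : Fin (d (k + 1)) → ℝ :=
  (W k).mulVec (zLayer d ρ W k x)

/-- The ReLU activation `ρ(t) = max(t, 0)`. -/
noncomputable def relu : ℝ → ℝ := fun t => max t 0

lemma matLinf_nonneg {m n : ℕ} (W : Matrix (Fin m) (Fin n) ℝ) : 0 ≤ matLinf W :=
  Real.iSup_nonneg fun _ => Finset.sum_nonneg fun _ _ => abs_nonneg _

lemma matL1_nonneg {m n : ℕ} (W : Matrix (Fin m) (Fin n) ℝ) : 0 ≤ matL1 W :=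
  Real.iSup_nonneg fun _ => Finset.sum_nonneg fun _ _ => abs_nonneg _

lemma row_le_matLinf {m n : ℕ} (W : Matrix (Fin m) (Fin n) ℝ) (p : Fin m) :
    ∑ q, |W p q| ≤ matLinf W :=
  le_ciSup (f := fun p => ∑ q, |W p q|) (Set.Finite.bddAbove (Set.finite_range _)) p

lemma col_le_matL1 {m n : ℕ} (W : Matrix (Fin m) (Fin n) ℝ) (q : Fin n) :
    ∑ p, |W p q| ≤ matL1 W :=
  le_ciSup (f := fun q => ∑ p, |W p q|) (Set.Finite.bddAbove (Set.finite_range _)) q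

lemma abs_relu_le (a : ℝ) : |relu a| ≤ |a| := by
  unfold relu
  rcases le_or_gt a 0 with h | h
  · simp [max_eq_right h]
  · simp [max_eq_left h.le, le_abs_self]

lemma relu_lip (a b : ℝ) : |relu a - relu b| ≤ |a - b| :=
  abs_max_sub_max_le_abs a b 0

section main
variable (d : ℕ → ℕ) (W : ∀ k, Matrix (Fin (d (k + 1))) (Fin (d k)) ℝ)
  (εx : ℝ) (x xhat : Fin (d 0) → ℝ)

lemma zdiff (hεx : 0 ≤ εx) (hx : ∀ q, |xhat q - x q| ≤ εx) :
    ∀ k, ∀ p, |zLayer d relu W k xhat p - zLayer d relu W k x p| ≤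
      (∏ m ∈ Finset.range k, matLinf (W m)) * εx := by
  intro k
  induction k with
  | zero => simpa [zLayer] using hx
  | succ k ih =>
    intro p
    have hnn : 0 ≤ (∏ m ∈ Finset.range k, matLinf (W m)) * εx :=
      mul_nonneg (Finset.prod_nonneg fun m _ => matLinf_nonneg _) hεx
    have h1 : |zLayer d relu W (k+1) xhat p - zLayer d relu W (k+1) x p| ≤
        |(W k).mulVec (zLayer d relu W k xhat) p - (W k).mulVec (zLayer d relu W k x) p| := by
      simpa [zLayer] using relu_lip ((W k).mulVec (zLayer d relu W k xhat) p)
        ((W k).mulVec (zLayer d relu W k x) p)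
    refine h1.trans ?_
    have h2 : (W k).mulVec (zLayer d relu W k xhat) p - (W k).mulVec (zLayer d relu W k x) p
        = ∑ q, W k p q * (zLayer d relu W k xhat q - zLayer d relu W k x q) := by
      simp only [Matrix.mulVec, dotProduct, ← Finset.sum_sub_distrib]
      exact Finset.sum_congr rfl fun q _ => by ring
    rw [h2]
    calc |∑ q, W k p q * (zLayer d relu W k xhat q - zLayer d relu W k x q)|
        ≤ ∑ q, |W k p q * (zLayer d relu W k xhat q - zLayer d relu W k x q)| :=
          Finset.abs_sum_le_sum_abs _ _
      _ ≤ ∑ q, |W k p q| * ((∏ m ∈ Finset.range k, matLinf (W m)) * εx) := by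
          refine Finset.sum_le_sum fun q _ => ?_
          rw [abs_mul]
          exact mul_le_mul_of_nonneg_left (ih q) (abs_nonneg _)
      _ = (∑ q, |W k p q|) * ((∏ m ∈ Finset.range k, matLinf (W m)) * εx) := by
          rw [Finset.sum_mul]
      _ ≤ matLinf (W k) * ((∏ m ∈ Finset.range k, matLinf (W m)) * εx) :=
          mul_le_mul_of_nonneg_right (row_le_matLinf _ _) hnn
      _ = (∏ m ∈ Finset.range (k+1), matLinf (W m)) * εx := by
          rw [Finset.prod_range_succ]; ring

lemma zL1 : ∀ k, vecL1 (zLayer d relu W k xhat) ≤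
    (∏ m ∈ Finset.range k, matL1 (W m)) * vecL1 xhat := by
  intro k
  induction k with
  | zero => simp [zLayer]
  | succ k ih =>
    calc vecL1 (zLayer d relu W (k+1) xhat)
        ≤ ∑ p, |(W k).mulVec (zLayer d relu W k xhat) p| := by
          refine Finset.sum_le_sum fun p _ => ?_
          simpa [zLayer] using abs_relu_le ((W k).mulVec (zLayer d relu W k xhat) p)
      _ ≤ ∑ p, ∑ q, |W k p q| * |zLayer d relu W k xhat q| := by
          refine Finset.sum_le_sum fun p _ => ?_
          simpa [Matrix.mulVec, dotProduct, abs_mul] using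
            Finset.abs_sum_le_sum_abs (fun q => W k p q * zLayer d relu W k xhat q) Finset.univ
      _ = ∑ q, (∑ p, |W k p q|) * |zLayer d relu W k xhat q| := by
          rw [Finset.sum_comm]; simp [Finset.sum_mul]
      _ ≤ ∑ q, matL1 (W k) * |zLayer d relu W k xhat q| :=
          Finset.sum_le_sum fun q _ =>
            mul_le_mul_of_nonneg_right (col_le_matL1 _ _) (abs_nonneg _)
      _ = matL1 (W k) * vecL1 (zLayer d relu W k xhat) := by
          unfold vecL1; rw [Finset.mul_sum]
      _ ≤ matL1 (W k) * ((∏ m ∈ Finset.range k, matL1 (W m)) * vecL1 xhat) :=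
          mul_le_mul_of_nonneg_left ih (matL1_nonneg _)
      _ = (∏ m ∈ Finset.range (k+1), matL1 (W m)) * vecL1 xhat := by
          rw [Finset.prod_range_succ]; ring

end main

/-- Theorem 1, case `N = L`: joint perturbation of the last weight
matrix and the input, with ReLU activation.

Indexing convention: `W k` is the paper's `W^{k+1}`, so the paper's `L`-layer network
is `net d relu W (L-1)`, the last matrix `W^L` is `W (L-1)`, and the perturbed network
is `Ŵ^L ρ(W^{L-1} ⋯ ρ(W^1 x̂) ⋯) = WhatL.mulVec (zLayer d relu W (L-1) xhat)`.
`∏_{m=1}^{L-1}` becomes a product over `Finset.range (L-1)`; `d_0 = d 0`. -/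
theorem statement1
    (d : ℕ → ℕ) (L : ℕ) (hL : 1 ≤ L)
    (W : ∀ k, Matrix (Fin (d (k + 1))) (Fin (d k)) ℝ)
    (WhatL : Matrix (Fin (d (L - 1 + 1))) (Fin (d (L - 1))) ℝ)
    (εL εx : ℝ) (hεL : 0 ≤ εL) (hεx : 0 ≤ εx)
    (hWL : ∀ p q, |WhatL p q - W (L - 1) p q| ≤ εL)
    (x xhat : Fin (d 0) → ℝ) (hx : ∀ q, |xhat q - x q| ≤ εx)
    (i j : Fin (d (L - 1 + 1))) :
    WhatL.mulVec (zLayer d relu W (L - 1) xhat) i -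
        WhatL.mulVec (zLayer d relu W (L - 1) xhat) j ≤
      (nnet d relu W (L - 1) x i - nnet d relu W (L - 1) x j) +
        εx * vecL1 (fun q => W (L - 1) i q - W (L - 1) j q) *
          (∏ m ∈ Finset.range (L - 1), matLinf (W m)) +
        2 * εL * (∏ m ∈ Finset.range (L - 1), matL1 (W m)) *
          (vecL1 x + (d 0 : ℝ) * εx) := by

  have hDinf : ∀ q, |zLayer d relu W (L-1) xhat q - zLayer d relu W (L-1) x q| ≤
      (∏ m ∈ Finset.range (L-1), matLinf (W m)) * εx :=
    zdiff d W εx x xhat hεx hx (L-1)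
  have hxhat : vecL1 xhat ≤ vecL1 x + (d 0 : ℝ) * εx := by
    unfold vecL1
    calc ∑ q, |xhat q| ≤ ∑ q, (|x q| + εx) := by
          refine Finset.sum_le_sum fun q _ => ?_
          calc |xhat q| = |x q + (xhat q - x q)| := by ring_nf
            _ ≤ |x q| + |xhat q - x q| := abs_add_le _ _
            _ ≤ |x q| + εx := by linarith [hx q]
      _ = (∑ q, |x q|) + (d 0 : ℝ) * εx := by
          rw [Finset.sum_add_distrib]; simp [mul_comm]
  have hzh1 : vecL1 (zLayer d relu W (L-1) xhat) ≤
      (∏ m ∈ Finset.range (L-1), matL1 (W m)) * (vecL1 x + (d 0 : ℝ) * εx) := by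
    refine (zL1 d W xhat (L-1)).trans ?_
    exact mul_le_mul_of_nonneg_left hxhat (Finset.prod_nonneg fun m _ => matL1_nonneg _)
  set z := zLayer d relu W (L-1) x
  set zh := zLayer d relu W (L-1) xhat
  have key : WhatL.mulVec zh i - WhatL.mulVec zh j -
        ((W (L-1)).mulVec z i - (W (L-1)).mulVec z j)
      = ∑ q, ((W (L-1) i q - W (L-1) j q) * (zh q - z q)
          + ((WhatL i q - W (L-1) i q) - (WhatL j q - W (L-1) j q)) * zh q) := by
    simp only [Matrix.mulVec, dotProduct, ← Finset.sum_sub_distrib,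
      ← Finset.sum_add_distrib]
    exact Finset.sum_congr rfl fun q _ => by ring
  have bound : WhatL.mulVec zh i - WhatL.mulVec zh j -
        ((W (L-1)).mulVec z i - (W (L-1)).mulVec z j)
      ≤ εx * vecL1 (fun q => W (L-1) i q - W (L-1) j q) *
          (∏ m ∈ Finset.range (L-1), matLinf (W m)) +
        2 * εL * (∏ m ∈ Finset.range (L-1), matL1 (W m)) * (vecL1 x + (d 0 : ℝ) * εx) := by
    rw [key]
    have step : ∀ q : Fin (d (L-1)), (W (L-1) i q - W (L-1) j q) * (zh q - z q)
          + ((WhatL i q - W (L-1) i q) - (WhatL j q - W (L-1) j q)) * zh q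
        ≤ |W (L-1) i q - W (L-1) j q| * ((∏ m ∈ Finset.range (L-1), matLinf (W m)) * εx)
          + 2 * εL * |zh q| := by
      intro q
      have h1 : (W (L-1) i q - W (L-1) j q) * (zh q - z q)
          ≤ |W (L-1) i q - W (L-1) j q| *
            ((∏ m ∈ Finset.range (L-1), matLinf (W m)) * εx) := by
        calc (W (L-1) i q - W (L-1) j q) * (zh q - z q)
            ≤ |(W (L-1) i q - W (L-1) j q) * (zh q - z q)| := le_abs_self _
          _ = |W (L-1) i q - W (L-1) j q| * |zh q - z q| := abs_mul _ _
          _ ≤ |W (L-1) i q - W (L-1) j q| *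
              ((∏ m ∈ Finset.range (L-1), matLinf (W m)) * εx) :=
              mul_le_mul_of_nonneg_left (hDinf q) (abs_nonneg _)
      have h2 : ((WhatL i q - W (L-1) i q) - (WhatL j q - W (L-1) j q)) * zh q
          ≤ 2 * εL * |zh q| := by
        calc ((WhatL i q - W (L-1) i q) - (WhatL j q - W (L-1) j q)) * zh q
            ≤ |((WhatL i q - W (L-1) i q) - (WhatL j q - W (L-1) j q)) * zh q| := le_abs_self _
          _ = |(WhatL i q - W (L-1) i q) - (WhatL j q - W (L-1) j q)| * |zh q| := abs_mul _ _
          _ ≤ (|WhatL i q - W (L-1) i q| + |WhatL j q - W (L-1) j q|) * |zh q| :=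
              mul_le_mul_of_nonneg_right (abs_sub _ _) (abs_nonneg _)
          _ ≤ (εL + εL) * |zh q| :=
              mul_le_mul_of_nonneg_right (add_le_add (hWL i q) (hWL j q)) (abs_nonneg _)
          _ = 2 * εL * |zh q| := by ring
      linarith
    calc ∑ q, ((W (L-1) i q - W (L-1) j q) * (zh q - z q)
          + ((WhatL i q - W (L-1) i q) - (WhatL j q - W (L-1) j q)) * zh q)
        ≤ ∑ q, (|W (L-1) i q - W (L-1) j q| *
              ((∏ m ∈ Finset.range (L-1), matLinf (W m)) * εx)
            + 2 * εL * |zh q|) := Finset.sum_le_sum fun q _ => step q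
      _ = vecL1 (fun q => W (L-1) i q - W (L-1) j q) *
              ((∏ m ∈ Finset.range (L-1), matLinf (W m)) * εx)
            + 2 * εL * vecL1 zh := by
          rw [Finset.sum_add_distrib, ← Finset.sum_mul, ← Finset.mul_sum]; rfl
      _ ≤ εx * vecL1 (fun q => W (L-1) i q - W (L-1) j q) *
            (∏ m ∈ Finset.range (L-1), matLinf (W m)) +
            2 * εL * (∏ m ∈ Finset.range (L-1), matL1 (W m)) *
              (vecL1 x + (d 0 : ℝ) * εx) := by
          have h3 : 2 * εL * vecL1 zh
              ≤ 2 * εL * ((∏ m ∈ Finset.range (L-1), matL1 (W m)) *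
                (vecL1 x + (d 0 : ℝ) * εx)) :=
            mul_le_mul_of_nonneg_left hzh1 (by linarith)
          nlinarith [h3]
  have hnet : nnet d relu W (L-1) x i - nnet d relu W (L-1) x j
      = (W (L-1)).mulVec z i - (W (L-1)).mulVec z j := rfl
  rw [hnet]
  linarith [bound]
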